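/- arXiv:1205.4738 — 9 statements merged into one kernel-verified Lean document; each statement's English description precedes it below -/
import Mathlib

section
/- Let c₁, c₂ ∈ ℝ² be distinct points, let r ≥ 0 satisfy 2r < dist(c₁, c₂), and let p ∈ closedBall(c₁, r) and q ∈ closedBall(c₂, r) (so p ≠ q). Then the angle θ between the vectors q − p and c₂ − c₁ satisfies sin θ ≤ 2r / dist(c₁, c₂); in particular θ < π/2. -/
/-- Let `c₁, c₂ ∈ ℝ²` be distinct points, let `r ≥ 0` satisfy `2r < dist(c₁, c₂)`, and let
`p ∈ closedBall(c₁, r)` and `q ∈ closedBall(c₂, r)` (so `p ≠ q`). Then the angle `θ`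
between the vectors `q − p` and `c₂ − c₁` satisfies `sin θ ≤ 2r / dist(c₁, c₂)`;
in particular `θ < π/2`. -/
theorem angle_of_balls_small (c₁ c₂ p q : EuclideanSpace ℝ (Fin 2)) (r : ℝ)
    (hne : c₁ ≠ c₂) (hr : 0 ≤ r) (h2r : 2 * r < dist c₁ c₂)
    (hp : p ∈ Metric.closedBall c₁ r) (hq : q ∈ Metric.closedBall c₂ r) :
    p ≠ q ∧
    Real.sin (InnerProductGeometry.angle (q - p) (c₂ - c₁)) ≤ 2 * r / dist c₁ c₂ ∧
    InnerProductGeometry.angle (q - p) (c₂ - c₁) < Real.pi / 2 := by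
  set v : EuclideanSpace ℝ (Fin 2) := c₂ - c₁ with hv
  set w : EuclideanSpace ℝ (Fin 2) := q - p with hw
  have hd : dist c₁ c₂ = ‖v‖ := by rw [dist_eq_norm, hv, norm_sub_rev]
  have hdpos : (0:ℝ) < ‖v‖ := by rw [← hd]; exact dist_pos.2 hne
  have hpc : ‖p - c₁‖ ≤ r := by rw [← dist_eq_norm]; exact Metric.mem_closedBall.1 hp
  have hqc : ‖q - c₂‖ ≤ r := by rw [← dist_eq_norm]; exact Metric.mem_closedBall.1 hq
  have hvw : ‖v - w‖ ≤ 2 * r := by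
    have : v - w = (p - c₁) - (q - c₂) := by rw [hv, hw]; abel
    rw [this]
    calc ‖(p - c₁) - (q - c₂)‖ ≤ ‖p - c₁‖ + ‖q - c₂‖ := norm_sub_le _ _
    _ ≤ r + r := add_le_add hpc hqc
    _ = 2 * r := by ring
  have h2r' : 2 * r < ‖v‖ := hd ▸ h2r
  have hwpos : (0:ℝ) < ‖w‖ := by
    have := norm_sub_norm_le v w
    have h := le_trans this hvw
    linarith
  have hpq : p ≠ q := by
    intro h
    rw [hw, h, sub_self, norm_zero] at hwpos
    exact lt_irrefl 0 hwpos
  have hinner : (inner ℝ (v - w) v : ℝ) ≤ ‖v - w‖ * ‖v‖ := real_inner_le_norm _ _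
  have hipos : 0 < (inner ℝ w v : ℝ) := by
    have hsub : (inner ℝ (v - w) v : ℝ) = (inner ℝ v v : ℝ) - (inner ℝ w v : ℝ) :=
      inner_sub_left v w v
    have hvv : (inner ℝ v v : ℝ) = ‖v‖ * ‖v‖ := real_inner_self_eq_norm_mul_norm v
    nlinarith [hinner, hvw]
  -- sine bound
  have hsin := InnerProductGeometry.sin_angle_mul_norm_mul_norm w v
  have hsq : (inner ℝ w w : ℝ) * (inner ℝ v v : ℝ) - (inner ℝ w v : ℝ) * (inner ℝ w v : ℝ)
      ≤ (2 * r * ‖w‖) ^ 2 := by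
    have hexp : ‖v - w‖ ^ 2 = (inner ℝ v v : ℝ) - 2 * (inner ℝ w v : ℝ) + (inner ℝ w w : ℝ) := by
      rw [← real_inner_self_eq_norm_sq, inner_sub_sub_self]
      rw [real_inner_comm v w]; ring
    have h4 : ‖v - w‖ ^ 2 ≤ (2 * r) ^ 2 := by
      apply sq_le_sq' _ hvw
      have : (0:ℝ) ≤ ‖v - w‖ := norm_nonneg _
      linarith
    have hww : (inner ℝ w w : ℝ) = ‖w‖ ^ 2 := real_inner_self_eq_norm_sq w
    nlinarith [sq_nonneg ((inner ℝ w v : ℝ) - (inner ℝ w w : ℝ)), hww, hexp, h4, sq_nonneg ‖w‖]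
  have hsqrt : Real.sqrt ((inner ℝ w w : ℝ) * (inner ℝ v v : ℝ) - (inner ℝ w v : ℝ) * (inner ℝ w v : ℝ))
      ≤ 2 * r * ‖w‖ := by
    have h2rw : (0:ℝ) ≤ 2 * r * ‖w‖ := by positivity
    calc Real.sqrt ((inner ℝ w w : ℝ) * (inner ℝ v v : ℝ) - (inner ℝ w v : ℝ) * (inner ℝ w v : ℝ))
        ≤ Real.sqrt ((2 * r * ‖w‖) ^ 2) := Real.sqrt_le_sqrt hsq
      _ = 2 * r * ‖w‖ := Real.sqrt_sq h2rw
  have hsin2 : Real.sin (InnerProductGeometry.angle w v) * (‖w‖ * ‖v‖) ≤ 2 * r * ‖w‖ := by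
    rw [hsin]; exact hsqrt
  have hsinle : Real.sin (InnerProductGeometry.angle w v) ≤ 2 * r / dist c₁ c₂ := by
    rw [hd, le_div_iff₀ hdpos]
    nlinarith [hsin2, hwpos, hdpos]
  have hang : InnerProductGeometry.angle w v < Real.pi / 2 := by
    rw [InnerProductGeometry.angle]
    rw [Real.arccos_lt_pi_div_two]
    positivity
  exact ⟨hpq, hsinle, hang⟩
end

section
/- Let ε ∈ (0, 1/4], let c_u, c_v ∈ ℝ² be distinct points, and set d = dist(c_u, c_v). Let A ⊆ closedBall(c_u, ε·d) and B ⊆ closedBall(c_v, ε·d). Then for any points p, p′ ∈ A and q, q′ ∈ B (with p ≠ q and p′ ≠ q′), the angle between the vectors q − p and q′ − p′ is at most 8ε. -/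
set_option maxHeartbeats 1000000

open InnerProductGeometry Real RealInnerProductSpace

private lemma my_abs_toReal_add_le (a b : Real.Angle) :
    |(a + b).toReal| ≤ |a.toReal| + |b.toReal| := by
  have hab : a + b = ((a.toReal + b.toReal : ℝ) : Real.Angle) := by
    rw [Real.Angle.coe_add, a.coe_toReal, b.coe_toReal]
  by_cases h : -π < a.toReal + b.toReal ∧ a.toReal + b.toReal ≤ π
  · rw [hab, Real.Angle.toReal_coe_eq_self_iff.2 h]
    exact abs_add_le _ _
  · have h1 : π ≤ |a.toReal + b.toReal| := by
      rcases not_and_or.1 h with h' | h' <;> push_neg at h' <;>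
        rcases abs_cases (a.toReal + b.toReal) with ⟨he, _⟩ | ⟨he, _⟩ <;>
        linarith [Real.pi_pos]
    calc |(a + b).toReal| ≤ π := Real.Angle.abs_toReal_le_pi _
      _ ≤ |a.toReal + b.toReal| := h1
      _ ≤ |a.toReal| + |b.toReal| := abs_add_le _ _

private lemma my_angle_triangle (x y z : EuclideanSpace ℝ (Fin 2))
    (hx : x ≠ 0) (hy : y ≠ 0) (hz : z ≠ 0) :
    angle x z ≤ angle x y + angle y z := by
  haveI : Fact (Module.finrank ℝ (EuclideanSpace ℝ (Fin 2)) = 2) :=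
    ⟨finrank_euclideanSpace_fin⟩
  have o : Orientation ℝ (EuclideanSpace ℝ (Fin 2)) (Fin 2) :=
    (EuclideanSpace.basisFun (Fin 2) ℝ).toBasis.orientation
  rw [o.angle_eq_abs_oangle_toReal hx hz, o.angle_eq_abs_oangle_toReal hx hy,
    o.angle_eq_abs_oangle_toReal hy hz, ← o.oangle_add hx hy hz]
  exact my_abs_toReal_add_le _ _

private lemma my_angle_near (w D : EuclideanSpace ℝ (Fin 2)) (hD : D ≠ 0)
    (ε : ℝ) (hε0 : 0 < ε) (hε1 : ε ≤ 1 / 4) (h : ‖w - D‖ ≤ 2 * ε * ‖D‖) :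
    angle w D ≤ 4 * ε := by
  have hd : 0 < ‖D‖ := norm_pos_iff.2 hD
  set e : EuclideanSpace ℝ (Fin 2) := w - D with he_def
  have hwD : w = D + e := by simp [he_def]
  have he : ‖e‖ ≤ 2 * ε * ‖D‖ := h
  have hw_lb : (1 - 2 * ε) * ‖D‖ ≤ ‖w‖ := by
    have := norm_sub_norm_le D w
    rw [norm_sub_rev, ← he_def] at this
    nlinarith
  have hw : 0 < ‖w‖ := lt_of_lt_of_le (by nlinarith) hw_lb
  have hwne : w ≠ 0 := norm_pos_iff.1 hw
  have hinner : (inner ℝ w D : ℝ) = (inner ℝ D D : ℝ) + (inner ℝ e D : ℝ) := by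
    rw [hwD, inner_add_left]
  have heD : |(inner ℝ e D : ℝ)| ≤ ‖e‖ * ‖D‖ := abs_real_inner_le_norm e D
  have hDD : (inner ℝ D D : ℝ) = ‖D‖ ^ 2 := by
    rw [real_inner_self_eq_norm_sq]
  have hee : (inner ℝ e e : ℝ) = ‖e‖ ^ 2 := by
    rw [real_inner_self_eq_norm_sq]
  have hinner_lb : (1 - 2 * ε) * ‖D‖ ^ 2 ≤ (inner ℝ w D : ℝ) := by
    rw [hinner, hDD]
    have := abs_le.1 heD
    nlinarith
  have hinner_pos : 0 < (inner ℝ w D : ℝ) := lt_of_lt_of_le (by nlinarith) hinner_lb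
  -- cos bound
  have hcos : Real.cos (angle w D) = (inner ℝ w D : ℝ) / (‖w‖ * ‖D‖) := cos_angle w D
  have hcos_pos : 0 < Real.cos (angle w D) := by
    rw [hcos]; positivity
  have hlt : angle w D < π / 2 := by
    by_contra hc
    push_neg at hc
    have : Real.cos (angle w D) ≤ 0 :=
      Real.cos_nonpos_of_pi_div_two_le_of_le hc
        (le_trans (angle_le_pi w D) (by linarith [Real.pi_pos]))
    linarith
  -- sin bound
  have hsin : Real.sin (angle w D) * (‖w‖ * ‖D‖) =
      √((inner ℝ w w : ℝ) * (inner ℝ D D : ℝ) - (inner ℝ w D : ℝ) * (inner ℝ w D : ℝ)) := sin_angle_mul_norm_mul_norm w D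
  have hgram : (inner ℝ w w : ℝ) * (inner ℝ D D : ℝ) - (inner ℝ w D : ℝ) * (inner ℝ w D : ℝ) =
      (inner ℝ e e : ℝ) * (inner ℝ D D : ℝ) - (inner ℝ e D : ℝ) * (inner ℝ e D : ℝ) := by
    have hww : (inner ℝ w w : ℝ) = (inner ℝ D D : ℝ) + 2 * (inner ℝ e D : ℝ) + (inner ℝ e e : ℝ) := by
      rw [hwD, inner_add_left, inner_add_right, inner_add_right,
        real_inner_comm e D]
      ring
    rw [hww, hinner]; ring
  have hgram_le : (inner ℝ w w : ℝ) * (inner ℝ D D : ℝ) - (inner ℝ w D : ℝ) * (inner ℝ w D : ℝ) ≤ (2 * ε * ‖D‖ ^ 2) ^ 2 := by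
    rw [hgram, hee, hDD]
    have h3 : ‖e‖ ^ 2 ≤ (2 * ε * ‖D‖) ^ 2 := by nlinarith [norm_nonneg e]
    nlinarith [sq_nonneg ((inner ℝ e D : ℝ)), mul_le_mul_of_nonneg_right h3 (sq_nonneg ‖D‖)]
  have hsin_le : Real.sin (angle w D) * (‖w‖ * ‖D‖) ≤ 2 * ε * ‖D‖ ^ 2 := by
    rw [hsin]
    calc √((inner ℝ w w : ℝ) * (inner ℝ D D : ℝ) - (inner ℝ w D : ℝ) * (inner ℝ w D : ℝ))
        ≤ √((2 * ε * ‖D‖ ^ 2) ^ 2) := Real.sqrt_le_sqrt hgram_le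
      _ = 2 * ε * ‖D‖ ^ 2 := Real.sqrt_sq (by positivity)
  -- tan bound
  rcases eq_or_lt_of_le (angle_nonneg w D) with h0 | h0
  · rw [← h0]; positivity
  have htan : angle w D < Real.tan (angle w D) := Real.lt_tan h0 hlt
  have htan_le : Real.tan (angle w D) ≤ 2 * ε / (1 - 2 * ε) := by
    rw [Real.tan_eq_sin_div_cos]
    rw [div_le_div_iff₀ hcos_pos (by linarith)]
    have hc1 : (1 - 2 * ε) * ‖D‖ ^ 2 / (‖w‖ * ‖D‖) ≤ Real.cos (angle w D) := by
      rw [hcos]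
      gcongr
    have hs1 : Real.sin (angle w D) ≤ 2 * ε * ‖D‖ ^ 2 / (‖w‖ * ‖D‖) := by
      rw [le_div_iff₀ (by positivity : (0:ℝ) < ‖w‖ * ‖D‖)]
      exact hsin_le
    have hwd : 0 < ‖w‖ * ‖D‖ := by positivity
    calc Real.sin (angle w D) * (1 - 2 * ε)
        ≤ (2 * ε * ‖D‖ ^ 2 / (‖w‖ * ‖D‖)) * (1 - 2 * ε) := by
          apply mul_le_mul_of_nonneg_right hs1 (by linarith)
      _ = (2 * ε) * ((1 - 2 * ε) * ‖D‖ ^ 2 / (‖w‖ * ‖D‖)) := by ring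
      _ ≤ (2 * ε) * Real.cos (angle w D) := by
          apply mul_le_mul_of_nonneg_left hc1 (by positivity)
      _ = 2 * ε * Real.cos (angle w D) := by ring
  have : 2 * ε / (1 - 2 * ε) ≤ 4 * ε := by
    rw [div_le_iff₀ (by linarith)]
    nlinarith
  linarith

/-- Let `ε ∈ (0, 1/4]`, let `c_u, c_v ∈ ℝ²` be distinct points, and set `d = dist(c_u, c_v)`.
Let `A ⊆ closedBall(c_u, ε·d)` and `B ⊆ closedBall(c_v, ε·d)`. Then for any points
`p, p′ ∈ A` and `q, q′ ∈ B` (with `p ≠ q` and `p′ ≠ q′`), the angle between the vectors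
`q − p` and `q′ − p′` is at most `8ε`. -/
theorem angle_between_directions_le (ε : ℝ) (hε0 : 0 < ε) (hε1 : ε ≤ 1 / 4)
    (cu cv : EuclideanSpace ℝ (Fin 2)) (hne : cu ≠ cv)
    (A B : Set (EuclideanSpace ℝ (Fin 2)))
    (hA : A ⊆ Metric.closedBall cu (ε * dist cu cv))
    (hB : B ⊆ Metric.closedBall cv (ε * dist cu cv))
    (p p' q q' : EuclideanSpace ℝ (Fin 2))
    (hp : p ∈ A) (hp' : p' ∈ A) (hq : q ∈ B) (hq' : q' ∈ B)
    (hpq : p ≠ q) (hpq' : p' ≠ q') :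
    InnerProductGeometry.angle (q - p) (q' - p') ≤ 8 * ε := by
  set D : EuclideanSpace ℝ (Fin 2) := cv - cu with hD_def
  have hD : D ≠ 0 := sub_ne_zero_of_ne (Ne.symm hne)
  have hdd : dist cu cv = ‖D‖ := by
    rw [dist_eq_norm, hD_def, norm_sub_rev]
  have key : ∀ x y : EuclideanSpace ℝ (Fin 2), x ∈ A → y ∈ B → ‖(y - x) - D‖ ≤ 2 * ε * ‖D‖ := by
    intro x y hx hy
    have h1 : ‖x - cu‖ ≤ ε * ‖D‖ := by
      have := hA hx
      rw [Metric.mem_closedBall, dist_eq_norm] at this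
      rwa [hdd] at this
    have h2 : ‖y - cv‖ ≤ ε * ‖D‖ := by
      have := hB hy
      rw [Metric.mem_closedBall, dist_eq_norm] at this
      rwa [hdd] at this
    have : (y - x) - D = (y - cv) - (x - cu) := by
      rw [hD_def]; abel
    rw [this]
    calc ‖(y - cv) - (x - cu)‖ ≤ ‖y - cv‖ + ‖x - cu‖ := norm_sub_le _ _
      _ ≤ ε * ‖D‖ + ε * ‖D‖ := add_le_add h2 h1
      _ = 2 * ε * ‖D‖ := by ring
  have h1 : InnerProductGeometry.angle (q - p) D ≤ 4 * ε :=
    my_angle_near _ D hD ε hε0 hε1 (key p q hp hq)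
  have h2 : InnerProductGeometry.angle (q' - p') D ≤ 4 * ε :=
    my_angle_near _ D hD ε hε0 hε1 (key p' q' hp' hq')
  have hw : (q - p) ≠ 0 := sub_ne_zero_of_ne (Ne.symm hpq)
  have hw' : (q' - p') ≠ 0 := sub_ne_zero_of_ne (Ne.symm hpq')
  have htri := my_angle_triangle (q - p) D (q' - p') hw hD hw'
  rw [InnerProductGeometry.angle_comm D (q' - p')] at htri
  linarith
end

section
/- Let p, q, x ∈ ℝ² satisfy 0 < ‖x − p‖ < ‖q − p‖, and suppose the angle between the vectors x − p and q − p is at most π/3. Then ‖x − q‖ < ‖q − p‖; that is, x lies in the open lune of p and q (the intersection of the two open disks of radius ‖q − p‖ centered at p and at q). -/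
/-- Let `p, q, x ∈ ℝ²` satisfy `0 < ‖x − p‖ < ‖q − p‖`, and suppose the angle between the
vectors `x − p` and `q − p` is at most `π/3`. Then `‖x − q‖ < ‖q − p‖`; that is, `x` lies
in the open lune of `p` and `q`. -/
theorem mem_lune_of_angle_le (p q x : EuclideanSpace ℝ (Fin 2))
    (h0 : 0 < ‖x - p‖) (h1 : ‖x - p‖ < ‖q - p‖)
    (hangle : InnerProductGeometry.angle (x - p) (q - p) ≤ Real.pi / 3) :
    ‖x - q‖ < ‖q - p‖ := by
  set u := x - p with hu
  set v := q - p with hv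
  have hxq : x - q = u - v := by rw [hu, hv]; abel
  have hcos : Real.cos (Real.pi / 3) ≤ Real.cos (InnerProductGeometry.angle u v) := by
    apply Real.cos_le_cos_of_nonneg_of_le_pi (InnerProductGeometry.angle_nonneg u v) _ hangle
    linarith [Real.pi_pos]
  rw [Real.cos_pi_div_three] at hcos
  have hinner := InnerProductGeometry.cos_angle_mul_norm_mul_norm u v
  have hge : (1/2 : ℝ) * (‖u‖ * ‖v‖) ≤ (inner ℝ u v : ℝ) := by
    rw [← hinner]
    have : (0:ℝ) ≤ ‖u‖ * ‖v‖ := by positivity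
    nlinarith
  have hsq : ‖u - v‖ ^ 2 = ‖u‖ ^ 2 - 2 * (inner ℝ u v : ℝ) + ‖v‖ ^ 2 := by
    rw [@norm_sub_sq_real]
  have h2 : ‖u - v‖ ^ 2 < ‖v‖ ^ 2 := by nlinarith
  rw [hxq]
  exact lt_of_pow_lt_pow_left₀ 2 (norm_nonneg v) h2
end

section
/- Let P ⊆ ℝ² be a finite set and let p, q ∈ P be distinct points such that the open lune of p and q contains no point of P. Then for every x ∈ P with x ≠ p such that the angle between the vectors x − p and q − p is at most π/3, one has ‖q − p‖ ≤ ‖x − p‖. (In words: if the lune of an edge pq is empty, then q is a nearest neighbor of p among the points of P lying in any cone of apex p and opening angle at most π/3 that contains q.) -/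
/-- Let `P ⊆ ℝ²` be a finite set and let `p, q ∈ P` be distinct points such that the open
lune of `p` and `q` (the intersection of the two open disks of radius `‖p − q‖` centered
at `p` and at `q`) contains no point of `P`. Then for every `x ∈ P` with `x ≠ p` such that
the angle between the vectors `x − p` and `q − p` is at most `π/3`, one has
`‖q − p‖ ≤ ‖x − p‖`. -/
theorem nearest_in_cone_of_empty_lune (P : Set (EuclideanSpace ℝ (Fin 2))) (hP : P.Finite)
    (p q : EuclideanSpace ℝ (Fin 2)) (hp : p ∈ P) (hq : q ∈ P) (hpq : p ≠ q)
    (hlune : ∀ x ∈ P,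
      x ∉ Metric.ball p (dist p q) ∩ Metric.ball q (dist p q)) :
    ∀ x ∈ P, x ≠ p →
      InnerProductGeometry.angle (x - p) (q - p) ≤ Real.pi / 3 →
      ‖q - p‖ ≤ ‖x - p‖ := by
  intro x hx hxp hang
  by_contra hlt
  push_neg at hlt
  have hang' : EuclideanGeometry.angle x p q = InnerProductGeometry.angle (x - p) (q - p) := by
    simp [EuclideanGeometry.angle, vsub_eq_sub]
  have hlaw := EuclideanGeometry.law_cos x p q
  have hcos : (1 : ℝ) / 2 ≤ Real.cos (EuclideanGeometry.angle x p q) := by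
    have h1 : Real.cos (Real.pi / 3) ≤ Real.cos (EuclideanGeometry.angle x p q) := by
      apply Real.cos_le_cos_of_nonneg_of_le_pi
      · rw [hang']; exact InnerProductGeometry.angle_nonneg _ _
      · linarith [Real.pi_pos]
      · rw [hang']; exact hang
    rwa [Real.cos_pi_div_three] at h1
  have hdxp : dist x p = ‖x - p‖ := by rw [dist_eq_norm]
  have hdpq : dist p q = ‖q - p‖ := by rw [dist_eq_norm, ← norm_neg]; congr 1; abel
  have hxp0 : (0 : ℝ) < ‖x - p‖ := by
    rw [norm_pos_iff]; exact sub_ne_zero_of_ne hxp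
  have hdqp : dist q p = ‖q - p‖ := by rw [dist_eq_norm]
  rw [hdxp, hdqp] at hlaw
  have hdxq : dist x q < ‖q - p‖ := by
    by_contra hge
    push_neg at hge
    have hsq : ‖q - p‖ * ‖q - p‖ ≤ dist x q * dist x q :=
      mul_self_le_mul_self (norm_nonneg _) hge
    nlinarith [hlaw, hcos, hxp0, hlt, hsq, mul_pos hxp0 (hxp0.trans hlt)]
  refine hlune x hx ⟨Metric.mem_ball.2 ?_, Metric.mem_ball.2 ?_⟩
  · rw [dist_comm p q, hdqp, hdxp]; exact hlt
  · rw [dist_comm p q, hdqp]; exact hdxq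
end

section
/- Let ε ∈ (0,1) and let U, V ⊆ ℝ² be nonempty finite disjoint sets that are ε-well-separated, and assume all pairwise distances between distinct points of U ∪ V are distinct. Then every Euclidean minimum spanning tree of U ∪ V contains exactly one edge with one endpoint in U and one endpoint in V, and this edge joins the closest pair between U and V, i.e., the pair (p, q) ∈ U × V minimizing ‖p − q‖. -/
/-- The distance between two sets of points: the infimum of pairwise distances. -/
noncomputable def setDist (U V : Set (EuclideanSpace ℝ (Fin 2))) : ℝ :=
  sInf (Set.image2 dist U V)

/-- The total edge length of a graph on a finite planar point set. -/
noncomputable def totalLength {P : Finset (EuclideanSpace ℝ (Fin 2))}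
    (G : SimpleGraph ↥P) : ℝ :=
  ∑ᶠ e ∈ G.edgeSet,
    Sym2.lift ⟨fun (p q : ↥P) =>
      dist (p : EuclideanSpace ℝ (Fin 2)) (q : EuclideanSpace ℝ (Fin 2)),
      fun _ _ => dist_comm _ _⟩ e

/-- `T` is a Euclidean minimum spanning tree of `P`: a connected acyclic graph on vertex
set `P` whose total edge length is minimal among all connected graphs on vertex set `P`. -/
def IsEMST (P : Finset (EuclideanSpace ℝ (Fin 2))) (T : SimpleGraph ↥P) : Prop :=
  T.Connected ∧ T.IsAcyclic ∧
    ∀ G : SimpleGraph ↥P, G.Connected → totalLength T ≤ totalLength G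

attribute [local instance] Classical.decEq

section Helpers
open SimpleGraph

/-- The edge weight function. -/
noncomputable def edgeW {P : Finset (EuclideanSpace ℝ (Fin 2))} : Sym2 ↥P → ℝ :=
  Sym2.lift ⟨fun (p q : ↥P) =>
    dist (p : EuclideanSpace ℝ (Fin 2)) (q : EuclideanSpace ℝ (Fin 2)),
    fun _ _ => dist_comm _ _⟩

lemma totalLength_eq {P : Finset (EuclideanSpace ℝ (Fin 2))} (G : SimpleGraph ↥P) :
    totalLength G = ∑ᶠ e ∈ G.edgeSet, edgeW e := rfl

lemma edgeW_mk {P : Finset (EuclideanSpace ℝ (Fin 2))} (x y : ↥P) :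
    edgeW s(x, y) = dist (x : EuclideanSpace ℝ (Fin 2)) (y : EuclideanSpace ℝ (Fin 2)) := by
  simp [edgeW]

lemma totalLength_split {P : Finset (EuclideanSpace ℝ (Fin 2))} (G : SimpleGraph ↥P)
    {e : Sym2 ↥P} (he : e ∈ G.edgeSet) :
    totalLength G = edgeW e + ∑ᶠ f ∈ G.edgeSet \ {e}, edgeW f := by
  have h : G.edgeSet = {e} ∪ (G.edgeSet \ {e}) :=
    (Set.union_diff_cancel (Set.singleton_subset_iff.mpr he)).symm
  rw [totalLength_eq]
  conv_lhs => rw [h]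
  rw [
    finsum_mem_union Set.disjoint_sdiff_right (Set.toFinite _) (Set.toFinite _),
    finsum_mem_singleton]

/-- In a connected graph, after deleting one edge, every vertex is reachable from one of
its endpoints. -/
lemma reach_cover {VT : Type*} (T : SimpleGraph VT) (hc : T.Connected) (a b z : VT) :
    (T.deleteEdges {s(a, b)}).Reachable a z ∨ (T.deleteEdges {s(a, b)}).Reachable b z := by
  suffices H : ∀ (u v : VT), T.Walk u v →
      ((T.deleteEdges {s(a, b)}).Reachable a u ∨ (T.deleteEdges {s(a, b)}).Reachable b u) →
      ((T.deleteEdges {s(a, b)}).Reachable a v ∨ (T.deleteEdges {s(a, b)}).Reachable b v) by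
    obtain ⟨p⟩ := hc.preconnected a z
    exact H a z p (Or.inl (Reachable.refl a))
  intro u v p
  induction p with
  | nil => exact id
  | @cons u m v h p ih =>
    intro hu
    apply ih
    by_cases huv : s(u, m) = s(a, b)
    · rw [Sym2.eq_iff] at huv
      rcases huv with ⟨rfl, rfl⟩ | ⟨rfl, rfl⟩
      · exact Or.inr (Reachable.refl _)
      · exact Or.inl (Reachable.refl _)
    · have hadj : (T.deleteEdges {s(a, b)}).Adj u m := by
        rw [deleteEdges_adj]
        exact ⟨h, by simpa using huv⟩
      rcases hu with h1 | h1
      · exact Or.inl (h1.trans hadj.reachable)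
      · exact Or.inr (h1.trans hadj.reachable)

/-- The exchange argument: in a minimum spanning tree, an edge `{a,b}` cannot be replaced
by a strictly shorter edge `{x,y}` crossing the same cut. -/
lemma swap_aux {P : Finset (EuclideanSpace ℝ (Fin 2))} (T : SimpleGraph ↥P)
    (hc : T.Connected) (hac : T.IsAcyclic)
    (hmin : ∀ G : SimpleGraph ↥P, G.Connected → totalLength T ≤ totalLength G)
    {a b x y : ↥P} (hab : T.Adj a b)
    (hx : (T.deleteEdges {s(a, b)}).Reachable a x)
    (hy : (T.deleteEdges {s(a, b)}).Reachable b y)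
    (hlt : dist (x : EuclideanSpace ℝ (Fin 2)) (y : EuclideanSpace ℝ (Fin 2))
      < dist (a : EuclideanSpace ℝ (Fin 2)) (b : EuclideanSpace ℝ (Fin 2))) : False := by
  set T' := T.deleteEdges {s(a, b)} with hT'def
  have hbr : ¬ T'.Reachable a b := by
    have h := (isAcyclic_iff_forall_adj_isBridge.mp hac) hab
    rw [isBridge_iff] at h
    exact h
  have hxy : x ≠ y := by
    rintro rfl
    exact hbr (hx.trans hy.symm)
  have hne : s(x, y) ≠ s(a, b) := by
    intro h
    rw [Sym2.eq_iff] at h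
    rcases h with ⟨rfl, rfl⟩ | ⟨rfl, rfl⟩
    · exact lt_irrefl _ hlt
    · rw [dist_comm (x : EuclideanSpace ℝ (Fin 2))] at hlt
      exact lt_irrefl _ hlt
  have hnotmem : s(x, y) ∉ T.edgeSet := by
    intro hmem
    have hadj : T'.Adj x y := by
      rw [hT'def, deleteEdges_adj]
      exact ⟨(T.mem_edgeSet).mp hmem, by simpa using hne⟩
    exact hbr (hx.trans (hadj.reachable.trans hy.symm))
  set G' := T' ⊔ fromEdgeSet {s(x, y)} with hG'def
  have hT'le : T' ≤ G' := le_sup_left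
  have hadjxy : G'.Adj x y := by
    rw [hG'def, sup_adj]
    exact Or.inr ((fromEdgeSet_adj _).mpr ⟨rfl, hxy⟩)
  have hconn' : G'.Connected := by
    rw [connected_iff]
    refine ⟨?_, hc.nonempty⟩
    have ha : ∀ z, G'.Reachable a z := by
      intro z
      rcases reach_cover T hc a b z with h | h
      · exact h.mono hT'le
      · exact ((hx.mono hT'le).trans hadjxy.reachable).trans
          (((hy.mono hT'le).symm).trans (h.mono hT'le))
    intro z₁ z₂
    exact (ha z₁).symm.trans (ha z₂)
  have hxydiag : ¬ (s(x, y)).IsDiag := by simpa using hxy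
  have heset : G'.edgeSet = {s(x, y)} ∪ (T.edgeSet \ {s(a, b)}) := by
    rw [hG'def, edgeSet_sup, hT'def, edgeSet_deleteEdges, edgeSet_fromEdgeSet, Set.union_comm]
    congr 1
    ext f
    simp only [Set.mem_diff, Set.mem_singleton_iff, Set.mem_setOf_eq]
    constructor
    · exact fun h => h.1
    · rintro rfl
      exact ⟨rfl, hxydiag⟩
  have h1 : totalLength T = edgeW s(a, b) + ∑ᶠ f ∈ T.edgeSet \ {s(a, b)}, edgeW f :=
    totalLength_split T ((T.mem_edgeSet).mpr hab)
  have h2 : totalLength G' = edgeW s(x, y) + ∑ᶠ f ∈ T.edgeSet \ {s(a, b)}, edgeW f := by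
    rw [totalLength_eq, heset,
      finsum_mem_union (Set.disjoint_singleton_left.mpr (fun h => hnotmem h.1))
        (Set.toFinite _) (Set.toFinite _),
      finsum_mem_singleton]
  have hle := hmin G' hconn'
  rw [h1, h2, edgeW_mk, edgeW_mk] at hle
  linarith

end Helpers

/-- Let `ε ∈ (0,1)` and let `U, V ⊆ ℝ²` be nonempty finite disjoint sets that are
`ε`-well-separated, with all pairwise distances between distinct points of `U ∪ V`
distinct. Then every Euclidean minimum spanning tree of `U ∪ V` contains exactly one edge
with one endpoint in `U` and one endpoint in `V`, and this edge joins the closest pair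
between `U` and `V`. -/
theorem emst_unique_cross_edge_of_wellSeparated (ε : ℝ) (hε0 : 0 < ε) (hε1 : ε < 1)
    (U V : Finset (EuclideanSpace ℝ (Fin 2)))
    (hU : U.Nonempty) (hV : V.Nonempty) (hdisj : Disjoint U V)
    (hws : max (Metric.diam (U : Set (EuclideanSpace ℝ (Fin 2))))
        (Metric.diam (V : Set (EuclideanSpace ℝ (Fin 2))))
      ≤ ε * setDist ↑U ↑V)
    (hdist : ∀ p ∈ U ∪ V, ∀ q ∈ U ∪ V, ∀ r ∈ U ∪ V, ∀ s ∈ U ∪ V,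
      p ≠ q → r ≠ s → dist p q = dist r s →
        ({p, q} : Set (EuclideanSpace ℝ (Fin 2))) = {r, s})
    (T : SimpleGraph ↥(U ∪ V)) (hT : IsEMST (U ∪ V) T) :
    ∃ p q : ↥(U ∪ V),
      (p : EuclideanSpace ℝ (Fin 2)) ∈ U ∧ (q : EuclideanSpace ℝ (Fin 2)) ∈ V ∧
      T.Adj p q ∧
      dist (p : EuclideanSpace ℝ (Fin 2)) (q : EuclideanSpace ℝ (Fin 2)) = setDist ↑U ↑V ∧
      (∀ p' q' : ↥(U ∪ V),
        (p' : EuclideanSpace ℝ (Fin 2)) ∈ U → (q' : EuclideanSpace ℝ (Fin 2)) ∈ V →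
        T.Adj p' q' → p' = p ∧ q' = q) := by
  obtain ⟨hconn, hac, hmin⟩ := hT
  set d := setDist (↑U : Set (EuclideanSpace ℝ (Fin 2))) ↑V with hd
  -- basic facts about membership
  have hmem : ∀ z : ↥(U ∪ V), (z : EuclideanSpace ℝ (Fin 2)) ∈ U ∨
      (z : EuclideanSpace ℝ (Fin 2)) ∈ V := by
    intro z
    exact Finset.mem_union.mp z.2
  have hnotboth : ∀ a : EuclideanSpace ℝ (Fin 2), a ∈ U → a ∈ V → False := by
    intro a h1 h2
    exact Finset.disjoint_left.mp hdisj h1 h2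
  -- the closest pair
  have hfin : (Set.image2 Dist.dist (↑U : Set (EuclideanSpace ℝ (Fin 2))) ↑V).Finite :=
    Set.Finite.image2 Dist.dist U.finite_toSet V.finite_toSet
  have hne : (Set.image2 Dist.dist (↑U : Set (EuclideanSpace ℝ (Fin 2))) ↑V).Nonempty := by
    obtain ⟨u0, hu0⟩ := hU
    obtain ⟨v0, hv0⟩ := hV
    exact ⟨_, Set.mem_image2_of_mem (by exact_mod_cast hu0) (by exact_mod_cast hv0)⟩
  obtain ⟨p₀, hp₀, q₀, hq₀, hd₀⟩ := hne.csInf_mem hfin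
  rw [← setDist] at hd₀
  have hp₀' : p₀ ∈ U := by exact_mod_cast hp₀
  have hq₀' : q₀ ∈ V := by exact_mod_cast hq₀
  have hlb : ∀ p ∈ U, ∀ q ∈ V, d ≤ dist p q := by
    intro p hp q hq
    exact csInf_le hfin.bddBelow (Set.mem_image2_of_mem (by exact_mod_cast hp)
      (by exact_mod_cast hq))
  have hdpos : 0 < d := by
    rw [hd, ← hd₀]
    have : p₀ ≠ q₀ := fun h => hnotboth p₀ hp₀' (h ▸ hq₀')
    exact dist_pos.mpr this
  have hεd : ε * d < d := by nlinarith
  have hdU : ∀ p ∈ U, ∀ p' ∈ U, dist p p' ≤ ε * d := by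
    intro p hp p' hp'
    exact (Metric.dist_le_diam_of_mem U.finite_toSet.isBounded
      (by exact_mod_cast hp) (by exact_mod_cast hp')).trans ((le_max_left _ _).trans hws)
  have hdV : ∀ p ∈ V, ∀ p' ∈ V, dist p p' ≤ ε * d := by
    intro p hp p' hp'
    exact (Metric.dist_le_diam_of_mem V.finite_toSet.isBounded
      (by exact_mod_cast hp) (by exact_mod_cast hp')).trans ((le_max_right _ _).trans hws)
  -- key property of any cross edge
  have key : ∀ p q : ↥(U ∪ V), (p : EuclideanSpace ℝ (Fin 2)) ∈ U →
      (q : EuclideanSpace ℝ (Fin 2)) ∈ V → T.Adj p q →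
      (∀ z : ↥(U ∪ V), (T.deleteEdges {s(p, q)}).Reachable p z →
        (z : EuclideanSpace ℝ (Fin 2)) ∈ U) ∧
      (∀ z : ↥(U ∪ V), (T.deleteEdges {s(p, q)}).Reachable q z →
        (z : EuclideanSpace ℝ (Fin 2)) ∈ V) ∧
      dist (p : EuclideanSpace ℝ (Fin 2)) (q : EuclideanSpace ℝ (Fin 2)) = d := by
    intro p q hpU hqV hpq
    have hdlow : d ≤ dist (p : EuclideanSpace ℝ (Fin 2)) (q : EuclideanSpace ℝ (Fin 2)) :=
      hlb _ hpU _ hqV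
    have hA : ∀ z : ↥(U ∪ V), (T.deleteEdges {s(p, q)}).Reachable p z →
        (z : EuclideanSpace ℝ (Fin 2)) ∈ U := by
      intro z hz
      rcases hmem z with h | h
      · exact h
      · exfalso
        apply swap_aux T hconn hac hmin hpq hz (SimpleGraph.Reachable.refl q)
        calc dist (z : EuclideanSpace ℝ (Fin 2)) (q : EuclideanSpace ℝ (Fin 2))
            ≤ ε * d := hdV _ h _ hqV
          _ < d := hεd
          _ ≤ _ := hdlow
    have hB : ∀ z : ↥(U ∪ V), (T.deleteEdges {s(p, q)}).Reachable q z →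
        (z : EuclideanSpace ℝ (Fin 2)) ∈ V := by
      intro z hz
      rcases hmem z with h | h
      · exfalso
        apply swap_aux T hconn hac hmin hpq (SimpleGraph.Reachable.refl p) hz
        calc dist (p : EuclideanSpace ℝ (Fin 2)) (z : EuclideanSpace ℝ (Fin 2))
            ≤ ε * d := hdU _ hpU _ h
          _ < d := hεd
          _ ≤ _ := hdlow
      · exact h
    refine ⟨hA, hB, ?_⟩
    -- the closest pair as vertices
    have hp₀m : p₀ ∈ U ∪ V := Finset.mem_union_left _ hp₀'
    have hq₀m : q₀ ∈ U ∪ V := Finset.mem_union_right _ hq₀'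
    set p₀v : ↥(U ∪ V) := ⟨p₀, hp₀m⟩
    set q₀v : ↥(U ∪ V) := ⟨q₀, hq₀m⟩
    have hrp₀ : (T.deleteEdges {s(p, q)}).Reachable p p₀v := by
      rcases reach_cover T hconn p q p₀v with h | h
      · exact h
      · exact absurd (hB _ h) (fun hh => hnotboth p₀ hp₀' hh)
    have hrq₀ : (T.deleteEdges {s(p, q)}).Reachable q q₀v := by
      rcases reach_cover T hconn p q q₀v with h | h
      · exact absurd (hA _ h) (fun hh => hnotboth q₀ hh hq₀')
      · exact h
    by_contra hne'
    have hlt : d < dist (p : EuclideanSpace ℝ (Fin 2)) (q : EuclideanSpace ℝ (Fin 2)) :=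
      lt_of_le_of_ne hdlow (fun h => hne' h.symm)
    apply swap_aux T hconn hac hmin hpq hrp₀ hrq₀
    show dist (p₀v : EuclideanSpace ℝ (Fin 2)) (q₀v : EuclideanSpace ℝ (Fin 2)) < _
    rw [show (p₀v : EuclideanSpace ℝ (Fin 2)) = p₀ from rfl,
      show (q₀v : EuclideanSpace ℝ (Fin 2)) = q₀ from rfl, hd₀]
    exact hlt
  -- existence of a cross edge
  have hcross : ∃ p q : ↥(U ∪ V), (p : EuclideanSpace ℝ (Fin 2)) ∈ U ∧
      (q : EuclideanSpace ℝ (Fin 2)) ∈ V ∧ T.Adj p q := by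
    obtain ⟨u0, hu0⟩ := hU
    obtain ⟨v0, hv0⟩ := hV
    have hu0' : u0 ∈ U ∪ V := Finset.mem_union_left _ hu0
    have hv0' : v0 ∈ U ∪ V := Finset.mem_union_right _ hv0
    obtain ⟨w⟩ := hconn.preconnected ⟨u0, hu0'⟩ ⟨v0, hv0'⟩
    have H : ∀ (z₁ z₂ : ↥(U ∪ V)), T.Walk z₁ z₂ →
        (z₁ : EuclideanSpace ℝ (Fin 2)) ∈ U → (z₂ : EuclideanSpace ℝ (Fin 2)) ∈ V →
        ∃ p q : ↥(U ∪ V), (p : EuclideanSpace ℝ (Fin 2)) ∈ U ∧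
          (q : EuclideanSpace ℝ (Fin 2)) ∈ V ∧ T.Adj p q := by
      intro z₁ z₂ w
      induction w with
      | nil =>
        intro h1 h2
        exact absurd h2 (fun hh => hnotboth _ h1 hh)
      | @cons u m v h p ih =>
        intro h1 h2
        rcases hmem m with hm | hm
        · exact ih hm h2
        · exact ⟨u, m, h1, hm, h⟩
    exact H _ _ w hu0 hv0
  obtain ⟨p, q, hpU, hqV, hpq⟩ := hcross
  obtain ⟨hA, hB, hdeq⟩ := key p q hpU hqV hpq
  refine ⟨p, q, hpU, hqV, hpq, hdeq, ?_⟩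
  -- uniqueness
  intro p' q' hp'U hq'V hpq'
  obtain ⟨hA', hB', _⟩ := key p' q' hp'U hq'V hpq'
  have hbr' : ¬ (T.deleteEdges {s(p', q')}).Reachable p' q' := by
    have h := (SimpleGraph.isAcyclic_iff_forall_adj_isBridge.mp hac) hpq'
    rw [SimpleGraph.isBridge_iff] at h
    exact h
  have hsame : s(p, q) = s(p', q') := by
    by_contra hne'
    have hrp : (T.deleteEdges {s(p', q')}).Reachable p' p := by
      rcases reach_cover T hconn p' q' p with h | h
      · exact h
      · exact absurd (hB' _ h) (fun hh => hnotboth _ hpU hh)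
    have hrq : (T.deleteEdges {s(p', q')}).Reachable q' q := by
      rcases reach_cover T hconn p' q' q with h | h
      · exact absurd (hA' _ h) (fun hh => hnotboth _ hh hqV)
      · exact h
    have hadj : (T.deleteEdges {s(p', q')}).Adj p q := by
      rw [SimpleGraph.deleteEdges_adj]
      exact ⟨hpq, by simpa using hne'⟩
    exact hbr' ((hrp.trans hadj.reachable).trans hrq.symm)
  rw [Sym2.eq_iff] at hsame
  rcases hsame with ⟨rfl, rfl⟩ | ⟨rfl, rfl⟩
  · exact ⟨rfl, rfl⟩
  · exact absurd hqV (fun hh => hnotboth _ hp'U hh)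
end

section
/- Let c > 1 and let P ⊆ ℝ² be a finite set. Call a nonempty subset U ⊆ P a c-cluster if U = P or dist(U, P \ U) ≥ c · diam(U). Then any two c-clusters A and B satisfy A ∩ B = ∅, or A ⊆ B, or B ⊆ A; that is, the c-clusters of P form a laminar family. -/
lemma setDist_le {U V : Set (EuclideanSpace ℝ (Fin 2))} {x y : EuclideanSpace ℝ (Fin 2)}
    (hx : x ∈ U) (hy : y ∈ V) : setDist U V ≤ dist x y := by
  apply csInf_le
  · exact ⟨0, by rintro _ ⟨a, ha, b, hb, rfl⟩; exact dist_nonneg⟩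
  · exact ⟨x, hx, y, hy, rfl⟩

/-- Let `c > 1` and let `P ⊆ ℝ²` be a finite set. Call a nonempty subset `U ⊆ P` a
`c`-cluster if `U = P` or `dist(U, P \ U) ≥ c · diam(U)`. Then any two `c`-clusters `A`
and `B` satisfy `A ∩ B = ∅`, or `A ⊆ B`, or `B ⊆ A`: the `c`-clusters form a laminar
family. -/
theorem cClusters_laminar (c : ℝ) (hc : 1 < c)
    (P : Set (EuclideanSpace ℝ (Fin 2))) (hP : P.Finite)
    (A B : Set (EuclideanSpace ℝ (Fin 2)))
    (hAne : A.Nonempty) (hAP : A ⊆ P)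
    (hA : A = P ∨ c * Metric.diam A ≤ setDist A (P \ A))
    (hBne : B.Nonempty) (hBP : B ⊆ P)
    (hB : B = P ∨ c * Metric.diam B ≤ setDist B (P \ B)) :
    A ∩ B = ∅ ∨ A ⊆ B ∨ B ⊆ A := by
  by_contra h
  push_neg at h
  obtain ⟨hInt, hAB, hBA⟩ := h
  obtain ⟨x, hxA, hxB⟩ := hInt
  obtain ⟨a, haA, haB⟩ := Set.not_subset.1 hAB
  obtain ⟨b, hbB, hbA⟩ := Set.not_subset.1 hBA
  have hbdA : Bornology.IsBounded A := (hP.subset hAP).isBounded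
  have hbdB : Bornology.IsBounded B := (hP.subset hBP).isBounded
  have hA' : c * Metric.diam A ≤ setDist A (P \ A) := by
    rcases hA with rfl | h
    · exact absurd (hBP hbB) hbA
    · exact h
  have hB' : c * Metric.diam B ≤ setDist B (P \ B) := by
    rcases hB with rfl | h
    · exact absurd (hAP haA) haB
    · exact h
  have h1 : c * Metric.diam A ≤ Metric.diam B :=
    le_trans hA' (le_trans (setDist_le hxA ⟨hBP hbB, hbA⟩) (Metric.dist_le_diam_of_mem hbdB hxB hbB))
  have h2 : c * Metric.diam B ≤ Metric.diam A :=
    le_trans hB' (le_trans (setDist_le hxB ⟨hAP haA, haB⟩) (Metric.dist_le_diam_of_mem hbdA hxA haA))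
  have hdA : 0 ≤ Metric.diam A := Metric.diam_nonneg
  have hdB : 0 ≤ Metric.diam B := Metric.diam_nonneg
  have hB0 : Metric.diam B = 0 := by nlinarith
  have : dist x b ≤ 0 := hB0 ▸ Metric.dist_le_diam_of_mem hbdB hxB hbB
  have : x = b := by
    have := dist_nonneg (x := x) (y := b); have : dist x b = 0 := le_antisymm ‹dist x b ≤ 0› this
    exact dist_eq_zero.1 this
  exact hbA (this ▸ hxA)
end

section
/- Let ε ∈ (0, π/400], and let p, q ∈ ℝ² satisfy ‖q − p‖ = 1 and suppose the angle between the vector q − p and the upward direction (0, 1) is at most 17ε. Then every point x ∈ ℝ² with ‖x − q‖ ≤ ε such that the angle between x − q and the downward direction (0, −1) is at most π/4 satisfies ‖x − p‖ ≤ 1. (In words: the part of the closed downward cone of opening angle π/2 with apex q that lies within distance ε of q is contained in the closed unit disk around p.) -/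
/-- The upward unit vector `(0, 1)` in the plane. -/
noncomputable def upDir : EuclideanSpace ℝ (Fin 2) :=
  (WithLp.equiv 2 (Fin 2 → ℝ)).symm ![0, 1]

/-- The downward unit vector `(0, −1)` in the plane. -/
noncomputable def downDir : EuclideanSpace ℝ (Fin 2) :=
  (WithLp.equiv 2 (Fin 2 → ℝ)).symm ![0, -1]

lemma cone_arith (ε c s u0 u1 v0 v1 nv : ℝ) (hε0 : 0 < ε)
    (hnu2 : u0 ^ 2 + u1 ^ 2 = 1) (hnv2 : v0 ^ 2 + v1 ^ 2 = nv ^ 2)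
    (hnvε : nv ≤ ε) (hnv : 0 < nv) (hcu : c ≤ u1)
    (hcv : Real.sqrt 2 / 2 * nv ≤ -v1)
    (hcs : c ^ 2 + s ^ 2 = 1) (hs0 : 0 ≤ s) (hsle : s ≤ 17 * ε)
    (hchalf : (1:ℝ)/2 ≤ c) (hεsmall : ε ≤ 1/100) :
    1 + 2 * (u0 * v0 + u1 * v1) + nv ^ 2 ≤ 1 := by
  have hc0 : (0:ℝ) ≤ c := by linarith
  have hsqrt2 : (7/5:ℝ) ≤ Real.sqrt 2 := by
    nlinarith [Real.sq_sqrt (by norm_num : (0:ℝ) ≤ 2), Real.sqrt_nonneg 2]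
  have hu1le : u1 ≤ 1 := by nlinarith [sq_nonneg u0]
  have hu0 : |u0| ≤ s := by rw [abs_le]; constructor <;> nlinarith
  have hv0abs : |v0| ≤ nv := by rw [abs_le]; constructor <;> nlinarith [sq_nonneg v1]
  have huv0 : u0 * v0 ≤ s * nv :=
    calc u0 * v0 ≤ |u0 * v0| := le_abs_self _
      _ = |u0| * |v0| := abs_mul _ _
      _ ≤ s * nv := mul_le_mul hu0 hv0abs (abs_nonneg _) hs0
  have hv1neg : v1 ≤ 0 := by nlinarith
  have hu1v1 : u1 * v1 ≤ c * v1 := by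
    nlinarith [mul_nonneg (sub_nonneg.2 hcu) (neg_nonneg.2 hv1neg)]
  have hcv1 : c * v1 ≤ -(c * (Real.sqrt 2 / 2 * nv)) := by
    linarith [mul_le_mul_of_nonneg_left hcv hc0]
  have h1 : (7/10:ℝ) ≤ c * Real.sqrt 2 := by
    have := mul_le_mul hchalf hsqrt2 (by norm_num : (0:ℝ) ≤ 7/5) hc0
    linarith
  have h2 : (7/20:ℝ) * nv ≤ c * (Real.sqrt 2 / 2 * nv) := by
    linarith [mul_le_mul_of_nonneg_right h1 (div_nonneg hnv.le (by norm_num : (0:ℝ) ≤ 2))]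
  have e1 : s * nv ≤ 17 * ε * nv := mul_le_mul_of_nonneg_right hsle hnv.le
  have e2 : nv ^ 2 ≤ ε * nv := by
    rw [sq]; exact mul_le_mul_of_nonneg_right hnvε hnv.le
  have e3 : ε * nv ≤ (1/100) * nv := mul_le_mul_of_nonneg_right hεsmall hnv.le
  linarith

set_option maxHeartbeats 1000000 in
lemma cone_aux (ε : ℝ) (hε0 : 0 < ε) (hε1 : ε ≤ Real.pi / 400)
    (u v : EuclideanSpace ℝ (Fin 2)) (hpq : ‖u‖ = 1)
    (hdir : InnerProductGeometry.angle u upDir ≤ 17 * ε)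
    (hx : ‖v‖ ≤ ε) (hang : InnerProductGeometry.angle v downDir ≤ Real.pi / 4) :
    ‖u + v‖ ≤ 1 := by
  by_cases hv0 : v = 0
  · rw [hv0, add_zero, hpq]
  have hpi : (0:ℝ) < Real.pi := Real.pi_pos
  have hpi4 : Real.pi ≤ 4 := Real.pi_le_four
  have hupn : ‖upDir‖ = 1 := by
    simp [upDir, EuclideanSpace.norm_eq, Fin.sum_univ_two]
  have hdownn : ‖downDir‖ = 1 := by
    simp [downDir, EuclideanSpace.norm_eq, Fin.sum_univ_two]
  have hiu : (inner ℝ u upDir : ℝ) = u 1 := by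
    simp [upDir, PiLp.inner_apply, Fin.sum_univ_two]
  have hiv : (inner ℝ v downDir : ℝ) = -(v 1) := by
    simp [downDir, PiLp.inner_apply, Fin.sum_univ_two]
  have hnv : (0:ℝ) < ‖v‖ := norm_pos_iff.mpr hv0
  have h17pi : 17 * ε ≤ Real.pi := by nlinarith
  have hcu : Real.cos (17 * ε) ≤ u 1 := by
    have := Real.cos_le_cos_of_nonneg_of_le_pi
      (InnerProductGeometry.angle_nonneg u upDir) h17pi hdir
    rw [InnerProductGeometry.cos_angle, hiu, hpq, hupn] at this
    simpa using this
  have hcv : Real.sqrt 2 / 2 * ‖v‖ ≤ -(v 1) := by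
    have := Real.cos_le_cos_of_nonneg_of_le_pi
      (InnerProductGeometry.angle_nonneg v downDir) (by linarith) hang
    rw [InnerProductGeometry.cos_angle, hiv, hdownn, mul_one, Real.cos_pi_div_four] at this
    calc Real.sqrt 2 / 2 * ‖v‖ ≤ (-(v 1) / ‖v‖) * ‖v‖ :=
          mul_le_mul_of_nonneg_right this (le_of_lt hnv)
      _ = -(v 1) := by field_simp
  have hnu2 : u 0 ^ 2 + u 1 ^ 2 = 1 := by
    have h := real_inner_self_eq_norm_sq u
    rw [hpq] at h
    rw [PiLp.inner_apply, Fin.sum_univ_two] at h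
    simp at h
    nlinarith [h]
  have hnv2 : v 0 ^ 2 + v 1 ^ 2 = ‖v‖ ^ 2 := by
    have h := real_inner_self_eq_norm_sq v
    rw [PiLp.inner_apply, Fin.sum_univ_two] at h
    simp at h
    nlinarith [h]
  have hcs : Real.cos (17 * ε) ^ 2 + Real.sin (17 * ε) ^ 2 = 1 := by
    nlinarith [Real.sin_sq_add_cos_sq (17 * ε)]
  have hs0 : 0 ≤ Real.sin (17 * ε) := Real.sin_nonneg_of_nonneg_of_le_pi (by linarith) h17pi
  have hsle : Real.sin (17 * ε) ≤ 17 * ε := Real.sin_le (by linarith)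
  have hchalf : (1:ℝ)/2 ≤ Real.cos (17 * ε) := by
    have h3 : 17 * ε ≤ Real.pi / 3 := by nlinarith
    have := Real.cos_le_cos_of_nonneg_of_le_pi (by linarith : (0:ℝ) ≤ 17 * ε)
      (by linarith : Real.pi / 3 ≤ Real.pi) h3
    rwa [Real.cos_pi_div_three] at this
  have hεsmall : ε ≤ 1/100 := by nlinarith
  have hinner : (inner ℝ u v : ℝ) = u 0 * v 0 + u 1 * v 1 := by
    simp [PiLp.inner_apply, Fin.sum_univ_two, mul_comm]
  have key : ‖u + v‖ ^ 2 ≤ 1 := by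
    rw [norm_add_sq_real, hpq, hinner]
    have := cone_arith ε (Real.cos (17 * ε)) (Real.sin (17 * ε)) (u 0) (u 1) (v 0) (v 1)
      ‖v‖ hε0 hnu2 hnv2 hx hnv hcu hcv hcs hs0 hsle hchalf hεsmall
    nlinarith [this]
  nlinarith [norm_nonneg (u + v), key]

/-- Let `ε ∈ (0, π/400]`, and let `p, q ∈ ℝ²` satisfy `‖q − p‖ = 1`, where the angle
between `q − p` and the upward direction `(0, 1)` is at most `17ε`. Then every point `x`
with `‖x − q‖ ≤ ε` such that the angle between `x − q` and the downward direction
`(0, −1)` is at most `π/4` satisfies `‖x − p‖ ≤ 1`. -/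
theorem downward_cone_near_q_in_unit_disk (ε : ℝ) (hε0 : 0 < ε) (hε1 : ε ≤ Real.pi / 400)
    (p q : EuclideanSpace ℝ (Fin 2)) (hpq : ‖q - p‖ = 1)
    (hdir : InnerProductGeometry.angle (q - p) upDir ≤ 17 * ε) :
    ∀ x : EuclideanSpace ℝ (Fin 2), ‖x - q‖ ≤ ε →
      InnerProductGeometry.angle (x - q) downDir ≤ Real.pi / 4 →
      ‖x - p‖ ≤ 1 := by
  intro x hx hang
  have h := cone_aux ε hε0 hε1 (q - p) (x - q) hpq hdir hx hang
  have heq : q - p + (x - q) = x - p := by abel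
  rwa [heq] at h
end

section
/- Let P ⊆ ℝ² be a finite set in which all pairwise distances between distinct points are distinct, and let Q ⊆ P be a nonempty subset with either Q = P or dist(Q, P \ Q) > diam(Q). Then for every Euclidean minimum spanning tree T of P, the subgraph of T induced on Q is connected (so it is a spanning tree of Q). -/
open SimpleGraph

lemma reach_split {V : Type*} {G : SimpleGraph V} (x y : V) {v t : V} (w : G.Walk v t) :
    (G.deleteEdges {s(x,y)}).Reachable v t ∨
    ((G.deleteEdges {s(x,y)}).Reachable v x ∧ (G.deleteEdges {s(x,y)}).Reachable t y) ∨
    ((G.deleteEdges {s(x,y)}).Reachable v y ∧ (G.deleteEdges {s(x,y)}).Reachable t x) := by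
  induction w with
  | nil => exact Or.inl (Reachable.refl _)
  | @cons v c t h w ih =>
    by_cases hvc : s(v, c) = s(x, y)
    · rcases Sym2.eq_iff.mp hvc with ⟨rfl, rfl⟩ | ⟨rfl, rfl⟩
      · rcases ih with hct | ⟨hcx, hty⟩ | ⟨hcy, htx⟩
        · exact Or.inr (Or.inl ⟨Reachable.refl _, hct.symm⟩)
        · exact Or.inr (Or.inl ⟨Reachable.refl _, hty⟩)
        · exact Or.inl htx.symm
      · rcases ih with hct | ⟨hcx, hty⟩ | ⟨hcy, htx⟩
        · exact Or.inr (Or.inr ⟨Reachable.refl _, hct.symm⟩)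
        · exact Or.inl hty.symm
        · exact Or.inr (Or.inr ⟨Reachable.refl _, htx⟩)
    · have hadj : (G.deleteEdges {s(x,y)}).Adj v c :=
        deleteEdges_adj.mpr ⟨h, by simpa using hvc⟩
      rcases ih with hct | ⟨hcx, hty⟩ | ⟨hcy, htx⟩
      · exact Or.inl (hadj.reachable.trans hct)
      · exact Or.inr (Or.inl ⟨hadj.reachable.trans hcx, hty⟩)
      · exact Or.inr (Or.inr ⟨hadj.reachable.trans hcy, htx⟩)

lemma cross_lemma {V : Type*} {G : SimpleGraph V} (S : Set V) :
    ∀ {a b : V} (w : G.Walk a b), w.edges.Nodup → ∀ (ha : a ∈ S) (hb : b ∈ S),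
    (G.induce S).Reachable ⟨a, ha⟩ ⟨b, hb⟩ ∨
    ∃ x y, G.Adj x y ∧ x ∈ S ∧ y ∉ S ∧
      (G.deleteEdges {s(x,y)}).Reachable a x ∧ (G.deleteEdges {s(x,y)}).Reachable y b := by
  intro a b w
  induction w with
  | nil => intro _ ha hb; exact Or.inl (Reachable.refl _)
  | @cons a c b h w ih =>
    intro hnd ha hb
    have hnd' : w.edges.Nodup := (List.nodup_cons.mp (by simpa using hnd)).2
    have hnm : s(a, c) ∉ w.edges := (List.nodup_cons.mp (by simpa using hnd)).1
    by_cases hc : c ∈ S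
    · rcases ih hnd' hc hb with hr | ⟨x, y, hxy, hxS, hyS, hcx, hyb⟩
      · refine Or.inl (Reachable.trans ?_ hr)
        exact Adj.reachable (by simpa using h)
      · have hne : s(a, c) ≠ s(x, y) := by
          intro hEq
          rcases Sym2.eq_iff.mp hEq with ⟨rfl, rfl⟩ | ⟨rfl, rfl⟩
          · exact hyS hc
          · exact hyS ha
        refine Or.inr ⟨x, y, hxy, hxS, hyS, ?_, hyb⟩
        exact (Adj.reachable (deleteEdges_adj.mpr ⟨h, by simpa using hne⟩)).trans hcx
    · refine Or.inr ⟨a, c, h, ha, hc, Reachable.refl _, ?_⟩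
      exact ⟨w.toDeleteEdges {s(a,c)} (fun e he => by
        simp only [Set.mem_singleton_iff]
        intro hEq; exact hnm (hEq ▸ he))⟩



/-- Let `P ⊆ ℝ²` be a finite set in which all pairwise distances between distinct points
are distinct, and let `Q ⊆ P` be a nonempty subset with either `Q = P` or
`dist(Q, P \ Q) > diam(Q)`. Then for every Euclidean minimum spanning tree `T` of `P`,
the subgraph of `T` induced on `Q` is connected. -/
theorem emst_induced_on_cluster_connected (P : Finset (EuclideanSpace ℝ (Fin 2)))
    (hdist : ∀ p ∈ P, ∀ q ∈ P, ∀ r ∈ P, ∀ s ∈ P,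
      p ≠ q → r ≠ s → dist p q = dist r s →
        ({p, q} : Set (EuclideanSpace ℝ (Fin 2))) = {r, s})
    (Q : Finset (EuclideanSpace ℝ (Fin 2))) (hQP : Q ⊆ P) (hQne : Q.Nonempty)
    (hQ : Q = P ∨
      Metric.diam (Q : Set (EuclideanSpace ℝ (Fin 2)))
        < setDist ↑Q ((↑P : Set (EuclideanSpace ℝ (Fin 2))) \ ↑Q))
    (T : SimpleGraph ↥P) (hT : IsEMST P T) :
    (T.induce {x : ↥P | (x : EuclideanSpace ℝ (Fin 2)) ∈ Q}).Connected := by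
  classical
  rcases hQ with hQ | hQ
  · -- Q = P : induce on univ
    have hS : {x : ↥P | (x : EuclideanSpace ℝ (Fin 2)) ∈ Q} = Set.univ :=
      Set.eq_univ_of_forall fun x => by simp [hQ, x.2]
    rw [hS]
    exact (induceUnivIso T).connected_iff.mpr hT.1
  · set S : Set ↥P := {x : ↥P | (x : EuclideanSpace ℝ (Fin 2)) ∈ Q} with hSdef
    obtain ⟨q0, hq0⟩ := hQne
    have hne : Nonempty ↥S := ⟨⟨⟨q0, hQP hq0⟩, hq0⟩⟩
    by_contra hcon
    rw [connected_iff] at hcon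
    push_neg at hcon
    have hpre : ¬ (T.induce S).Preconnected := fun hp => (not_isEmpty_iff.mpr hne) (hcon hp)
    rw [SimpleGraph.Preconnected] at hpre
    push_neg at hpre
    obtain ⟨a', b', hab⟩ := hpre
    set a : ↥P := (a' : ↥P) with hadef
    set b : ↥P := (b' : ↥P) with hbdef
    have haS : a ∈ S := a'.2
    have hbS : b ∈ S := b'.2
    -- a path from a to b in T
    obtain ⟨w0⟩ := hT.1 a b
    have hnd : w0.bypass.edges.Nodup := w0.bypass_isPath.isTrail.edges_nodup
    rcases cross_lemma S w0.bypass hnd haS hbS with hr | ⟨x, y, hxy, hxS, hyS, hax, hyb⟩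
    · exact hab (by simpa using hr)
    -- the crossing edge is a bridge
    have hmem : s(x, y) ∈ T.edgeSet := hxy
    have hbridge := (isAcyclic_iff_forall_edge_isBridge.mp hT.2.1) hmem
    have hbr : ¬ (T.deleteEdges {s(x, y)}).Reachable x y := (isBridge_iff.mp hbridge)
    have hnab : ¬ (T.deleteEdges {s(x, y)}).Reachable a b := fun hr =>
      hbr (hax.symm.trans (hr.trans hyb.symm))
    have habne : a ≠ b := by
      intro hEq
      exact hnab (hEq ▸ Reachable.refl a)
    -- the exchange graph
    set H : SimpleGraph ↥P := T.deleteEdges {s(x, y)} ⊔ fromEdgeSet {s(a, b)} with hHdef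
    have hHab : H.Adj a b := by
      simp only [hHdef, sup_adj, fromEdgeSet_adj]
      exact Or.inr ⟨rfl, habne⟩
    have hle : T.deleteEdges {s(x, y)} ≤ H := le_sup_left
    -- H is connected
    have hHreach : ∀ v : ↥P, H.Reachable v x := by
      intro v
      obtain ⟨wv⟩ := hT.1 v x
      rcases reach_split x y wv with hvx | ⟨hvx, _⟩ | ⟨hvy, _⟩
      · exact hvx.mono hle
      · exact hvx.mono hle
      · refine (hvy.mono hle).trans ?_
        exact (hyb.mono hle).trans (hHab.symm.reachable.trans (hax.mono hle))
    have hHconn : H.Connected := by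
      rw [connected_iff]
      exact ⟨fun u v => (hHreach u).trans (hHreach v).symm, ⟨a⟩⟩
    -- comparing lengths
    set f : Sym2 ↥P → ℝ := Sym2.lift ⟨fun (p q : ↥P) =>
      dist (p : EuclideanSpace ℝ (Fin 2)) (q : EuclideanSpace ℝ (Fin 2)),
      fun _ _ => dist_comm _ _⟩ with hfdef
    have habNotDel : s(a, b) ∉ (T.deleteEdges {s(x, y)}).edgeSet := by
      intro hmem'
      exact hnab (Adj.reachable hmem')
    have hEH : H.edgeSet = (T.edgeSet \ {s(x, y)}) ∪ {s(a, b)} := by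
      rw [hHdef, edgeSet_sup, edgeSet_deleteEdges, edgeSet_fromEdgeSet]
      congr 1
      ext z
      simp only [Set.mem_diff, Set.mem_singleton_iff, Set.mem_setOf_eq, and_iff_left_iff_imp]
      rintro rfl
      simp [Sym2.mk_isDiag_iff, habne]
    have hTfin : T.edgeSet.Finite := Set.toFinite _
    have hHfin : H.edgeSet.Finite := Set.toFinite _
    have hTsum : totalLength T = ∑ e ∈ hTfin.toFinset, f e :=
      finsum_mem_eq_finite_toFinset_sum _ hTfin
    have hHsum : totalLength H = ∑ e ∈ hHfin.toFinset, f e :=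
      finsum_mem_eq_finite_toFinset_sum _ hHfin
    have hHfs : hHfin.toFinset = insert s(a, b) (hTfin.toFinset.erase s(x, y)) := by
      ext z
      simp only [Set.Finite.mem_toFinset, Finset.mem_insert, Finset.mem_erase, hEH,
        Set.mem_union, Set.mem_diff, Set.mem_singleton_iff]
      tauto
    have habNotErase : s(a, b) ∉ hTfin.toFinset.erase s(x, y) := by
      simp only [Finset.mem_erase, Set.Finite.mem_toFinset]
      rintro ⟨hne', hmem'⟩
      exact habNotDel (by rw [edgeSet_deleteEdges]; exact ⟨hmem', hne'⟩)
    have hxyMem : s(x, y) ∈ hTfin.toFinset := hTfin.mem_toFinset.mpr hmem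
    have hTsum' : ∑ e ∈ hTfin.toFinset, f e
        = f s(x, y) + ∑ e ∈ hTfin.toFinset.erase s(x, y), f e :=
      (Finset.add_sum_erase _ f hxyMem).symm
    have hHsum' : ∑ e ∈ hHfin.toFinset, f e
        = f s(a, b) + ∑ e ∈ hTfin.toFinset.erase s(x, y), f e := by
      rw [hHfs, Finset.sum_insert habNotErase]
    -- distance comparison
    have hfab : f s(a, b) = dist (a : EuclideanSpace ℝ (Fin 2)) (b : EuclideanSpace ℝ (Fin 2)) :=
      rfl
    have hfxy : f s(x, y) = dist (x : EuclideanSpace ℝ (Fin 2)) (y : EuclideanSpace ℝ (Fin 2)) :=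
      rfl
    have hdab : dist (a : EuclideanSpace ℝ (Fin 2)) (b : EuclideanSpace ℝ (Fin 2))
        ≤ Metric.diam (Q : Set (EuclideanSpace ℝ (Fin 2))) :=
      Metric.dist_le_diam_of_mem (Q.finite_toSet.isBounded) haS hbS
    have hdxy : setDist ↑Q ((↑P : Set (EuclideanSpace ℝ (Fin 2))) \ ↑Q)
        ≤ dist (x : EuclideanSpace ℝ (Fin 2)) (y : EuclideanSpace ℝ (Fin 2)) := by
      apply csInf_le
      · exact ⟨0, fun d hd => by
          obtain ⟨p, _, q, _, rfl⟩ := hd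
          exact dist_nonneg⟩
      · exact Set.mem_image2_of_mem (by simpa [hSdef] using hxS)
          ⟨by simpa using y.2, by simpa [hSdef] using hyS⟩
    have hflt : f s(a, b) < f s(x, y) := by
      rw [hfab, hfxy]
      calc dist (a : EuclideanSpace ℝ (Fin 2)) (b : EuclideanSpace ℝ (Fin 2))
          ≤ Metric.diam (Q : Set (EuclideanSpace ℝ (Fin 2))) := hdab
        _ < setDist ↑Q ((↑P : Set (EuclideanSpace ℝ (Fin 2))) \ ↑Q) := hQ
        _ ≤ _ := hdxy
    have hlt : totalLength H < totalLength T := by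
      rw [hTsum, hHsum, hTsum', hHsum']
      linarith
    exact absurd (hT.2.2 H hHconn) (not_le.mpr hlt)
end

section
/- Let P ⊆ ℝ² be a finite set in which all pairwise distances between distinct points are distinct, let ε ∈ (0,1), and let U, V ⊆ P be nonempty disjoint subsets that are ε-well-separated. If a Euclidean minimum spanning tree of P contains an edge {p, q} with p ∈ U and q ∈ V, then (p, q) is the closest pair between U and V, i.e., ‖p − q‖ = dist(U, V). -/
private lemma walk_reach_aux {α : Type*} (T : SimpleGraph α) (p q : α) {x y : α}
    (w : T.Walk x y) :
    ((T.deleteEdges {s(p,q)}).Reachable x p ∨ (T.deleteEdges {s(p,q)}).Reachable x q) ∨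
      (T.deleteEdges {s(p,q)}).Reachable x y := by
  induction w with
  | nil => exact Or.inr (SimpleGraph.Reachable.refl _)
  | @cons u v _ h _ ih =>
    by_cases he : s(u, v) = s(p, q)
    · rw [Sym2.eq_iff] at he
      rcases he with ⟨rfl, rfl⟩ | ⟨rfl, rfl⟩
      · exact Or.inl (Or.inl (SimpleGraph.Reachable.refl _))
      · exact Or.inl (Or.inr (SimpleGraph.Reachable.refl _))
    · have hadj : (T.deleteEdges {s(p,q)}).Adj u v := by
        rw [SimpleGraph.deleteEdges_adj]
        exact ⟨h, by simpa using he⟩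
      rcases ih with (h' | h') | h'
      · exact Or.inl (Or.inl (hadj.reachable.trans h'))
      · exact Or.inl (Or.inr (hadj.reachable.trans h'))
      · exact Or.inr (hadj.reachable.trans h')

/-- Let `P ⊆ ℝ²` be a finite set in which all pairwise distances between distinct points
are distinct, let `ε ∈ (0,1)`, and let `U, V ⊆ P` be nonempty disjoint subsets that are
`ε`-well-separated. If a Euclidean minimum spanning tree of `P` contains an edge `{p, q}`
with `p ∈ U` and `q ∈ V`, then `(p, q)` is the closest pair between `U` and `V`. -/
theorem emst_cross_edge_is_closest_pair (P : Finset (EuclideanSpace ℝ (Fin 2)))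
    (hdist : ∀ p ∈ P, ∀ q ∈ P, ∀ r ∈ P, ∀ s ∈ P,
      p ≠ q → r ≠ s → dist p q = dist r s →
        ({p, q} : Set (EuclideanSpace ℝ (Fin 2))) = {r, s})
    (ε : ℝ) (hε0 : 0 < ε) (hε1 : ε < 1)
    (U V : Set (EuclideanSpace ℝ (Fin 2)))
    (hUP : U ⊆ ↑P) (hVP : V ⊆ ↑P)
    (hU : U.Nonempty) (hV : V.Nonempty) (hUV : U ∩ V = ∅)
    (hws : max (Metric.diam U) (Metric.diam V) ≤ ε * setDist U V)
    (T : SimpleGraph ↥P) (hT : IsEMST P T)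
    (p q : ↥P) (hp : (p : EuclideanSpace ℝ (Fin 2)) ∈ U)
    (hq : (q : EuclideanSpace ℝ (Fin 2)) ∈ V) (hadj : T.Adj p q) :
    dist (p : EuclideanSpace ℝ (Fin 2)) (q : EuclideanSpace ℝ (Fin 2)) = setDist U V := by
  classical
  set d := setDist U V with hd
  -- finiteness facts
  have hUfin : U.Finite := P.finite_toSet.subset hUP
  have hVfin : V.Finite := P.finite_toSet.subset hVP
  have hfin : (Set.image2 dist U V).Finite := hUfin.image2 _ hVfin
  have hne : (Set.image2 dist U V).Nonempty := hU.image2 hV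
  have hd_le : ∀ a ∈ U, ∀ b ∈ V, d ≤ dist a b := fun a ha b hb =>
    csInf_le hfin.bddBelow (Set.mem_image2_of_mem ha hb)
  -- the infimum is attained
  obtain ⟨u, hu, v, hv, huv⟩ := hne.csInf_mem hfin
  have hneq : ∀ a ∈ U, ∀ b ∈ V, a ≠ b := by
    intro a ha b hb hab
    exact absurd (hUV ▸ Set.mem_inter ha (hab ▸ hb)) (Set.notMem_empty a)
  have huv' : dist u v = d := huv
  have hd_pos : 0 < d := by
    rw [← huv']
    exact dist_pos.mpr (hneq u hu v hv)
  have hdiamU : Metric.diam U ≤ ε * d := le_trans (le_max_left _ _) hws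
  have hdiamV : Metric.diam V ≤ ε * d := le_trans (le_max_right _ _) hws
  have hεd : ε * d < d := by nlinarith
  have hd_le_pq : d ≤ dist (p : EuclideanSpace ℝ (Fin 2)) q := hd_le _ hp _ hq
  by_contra hcon
  have hlt : d < dist (p : EuclideanSpace ℝ (Fin 2)) q :=
    lt_of_le_of_ne hd_le_pq (fun h => hcon h.symm)
  -- the cut
  set T0 := T.deleteEdges {s(p, q)} with hT0
  have hbridge : ¬ T0.Reachable p q := by
    have := (SimpleGraph.isAcyclic_iff_forall_adj_isBridge.mp hT.2.1) hadj
    rw [SimpleGraph.isBridge_iff] at this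
    exact this
  have hAll : ∀ x : ↥P, T0.Reachable p x ∨ T0.Reachable q x := by
    intro x
    obtain ⟨w⟩ := hT.1 x p
    rcases walk_reach_aux T p q w with (h | h) | h
    · exact Or.inl h.symm
    · exact Or.inr h.symm
    · exact Or.inl h.symm
  have hdisj : ∀ x : ↥P, T0.Reachable p x → T0.Reachable q x → False := fun x h1 h2 =>
    hbridge (h1.trans h2.symm)
  -- the exchange argument
  have key : ∀ a b : ↥P, T0.Reachable p a → T0.Reachable q b →
      dist (a : EuclideanSpace ℝ (Fin 2)) b < dist (p : EuclideanSpace ℝ (Fin 2)) q → False := by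
    intro a b ha hb hlt'
    have hab : a ≠ b := fun h => hdisj b (h ▸ ha) hb
    set T' := T0 ⊔ SimpleGraph.edge a b with hT'
    have hT0le : T0 ≤ T' := le_sup_left
    have hab_adj : T'.Adj a b := by
      refine le_sup_right (b := SimpleGraph.edge a b) ?_
      rw [SimpleGraph.edge_adj]
      exact ⟨Or.inl ⟨rfl, rfl⟩, hab⟩
    have hconn : T'.Connected := by
      have hreach : ∀ x : ↥P, T'.Reachable p x := by
        intro x
        have hpq' : T'.Reachable p q :=
          ((ha.mono hT0le).trans hab_adj.reachable).trans (hb.mono hT0le).symm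
        rcases hAll x with h | h
        · exact h.mono hT0le
        · exact hpq'.trans (h.mono hT0le)
      haveI : Nonempty ↥P := ⟨p⟩
      exact ⟨fun x y => (hreach x).symm.trans (hreach y)⟩
    -- edge sets
    have hEfin : T.edgeSet.Finite := Set.toFinite _
    have hE'fin : T'.edgeSet.Finite := Set.toFinite _
    have hab_not : s(a, b) ∉ T0.edgeSet := by
      intro hmem
      exact hdisj b (ha.trans (T0.mem_edgeSet.mp hmem).reachable) hb
    have hE' : T'.edgeSet = (T.edgeSet \ {s(p, q)}) ∪ {s(a, b)} := by
      rw [hT', SimpleGraph.edgeSet_sup, hT0, SimpleGraph.edgeSet_deleteEdges,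
        SimpleGraph.edge_edgeSet_of_ne hab]
    have hT0E : T0.edgeSet = T.edgeSet \ {s(p, q)} := by
      rw [hT0, SimpleGraph.edgeSet_deleteEdges]
    set f : Sym2 ↥P → ℝ := Sym2.lift ⟨fun (p q : ↥P) =>
      dist (p : EuclideanSpace ℝ (Fin 2)) (q : EuclideanSpace ℝ (Fin 2)),
      fun _ _ => dist_comm _ _⟩ with hf
    have hpq_mem : s(p, q) ∈ hEfin.toFinset := by
      rw [Set.Finite.mem_toFinset]; exact hadj
    have hfinset : hE'fin.toFinset = insert s(a, b) (hEfin.toFinset.erase s(p, q)) := by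
      ext e
      simp only [Set.Finite.mem_toFinset, hE', Finset.mem_insert, Finset.mem_erase,
        Set.mem_union, Set.mem_diff, Set.mem_singleton_iff, Set.Finite.mem_toFinset]
      tauto
    have hnotmem : s(a, b) ∉ hEfin.toFinset.erase s(p, q) := by
      intro h
      rw [Finset.mem_erase, Set.Finite.mem_toFinset] at h
      exact hab_not (hT0E ▸ Set.mem_diff_of_mem h.2 h.1)
    have hTlen : totalLength T = ∑ e ∈ hEfin.toFinset, f e :=
      finsum_mem_eq_finite_toFinset_sum f hEfin
    have hT'len : totalLength T' = ∑ e ∈ hE'fin.toFinset, f e :=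
      finsum_mem_eq_finite_toFinset_sum f hE'fin
    have hsum : ∑ e ∈ hE'fin.toFinset, f e
        = f s(a, b) + (∑ e ∈ hEfin.toFinset, f e - f s(p, q)) := by
      rw [hfinset, Finset.sum_insert hnotmem]
      have := Finset.sum_erase_add hEfin.toFinset f hpq_mem
      linarith
    have hfab : f s(a, b) = dist (a : EuclideanSpace ℝ (Fin 2)) b := rfl
    have hfpq : f s(p, q) = dist (p : EuclideanSpace ℝ (Fin 2)) q := rfl
    have : totalLength T' < totalLength T := by
      rw [hTlen, hT'len, hsum, hfab, hfpq]
      linarith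
    exact absurd (hT.2.2 T' hconn) (not_le.mpr this)
  -- lifts of u, v to the subtype
  set u' : ↥P := ⟨u, hUP hu⟩ with hu'
  set v' : ↥P := ⟨v, hVP hv⟩ with hv'
  have hboundedU : Bornology.IsBounded U := hUfin.isBounded
  have hboundedV : Bornology.IsBounded V := hVfin.isBounded
  rcases hAll v' with hvA | hvB
  · -- v on p's side: use edge (v, q), both in V
    refine key v' q hvA (SimpleGraph.Reachable.refl q) ?_
    calc dist (v' : EuclideanSpace ℝ (Fin 2)) q ≤ Metric.diam V :=
          Metric.dist_le_diam_of_mem hboundedV hv hq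
      _ ≤ ε * d := hdiamV
      _ < d := hεd
      _ < _ := hlt
  · rcases hAll u' with huA | huB
    · -- u on p's side, v on q's side: use edge (u, v)
      refine key u' v' huA hvB ?_
      show dist u v < _
      rw [huv']
      exact hlt
    · -- u on q's side: use edge (p, u), both in U
      refine key p u' (SimpleGraph.Reachable.refl p) huB ?_
      calc dist (p : EuclideanSpace ℝ (Fin 2)) u' ≤ Metric.diam U :=
            Metric.dist_le_diam_of_mem hboundedU hp hu
        _ ≤ ε * d := hdiamU
        _ < d := hεd
        _ < _ := hlt
end
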